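/- arXiv:1104.0372 — 4 statements merged into one kernel-verified Lean document; each statement's English description precedes it below -/
import Mathlib

section
/- Let p ≥ 3 be a real number, let X_1,…,X_n be independent symmetric real random variables with E X_i^2 = 1, and let ε_1,…,ε_n be independent Rademacher random variables (taking values ±1 with probability 1/2 each). Then for all real coefficients a_1,…,a_n, (E|∑_{i=1}^n a_i ε_i|^p)^{1/p} ≤ (E|∑_{i=1}^n a_i X_i|^p)^{1/p}. -/
open MeasureTheory ProbabilityTheory Real
open scoped ENNReal

/-- The law of a Rademacher random variable: values `±1` with probability `1/2` each. -/
noncomputable def rademacherLaw : Measure ℝ :=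
  ((1 : ℝ≥0∞) / 2) • Measure.dirac (1 : ℝ) + ((1 : ℝ≥0∞) / 2) • Measure.dirac (-1 : ℝ)

/-- A random variable is symmetric if `X` and `-X` have the same distribution. -/
def IsSymmetricRV {Ω : Type*} [MeasurableSpace Ω] (X : Ω → ℝ) (μ : Measure Ω) : Prop :=
  Measure.map X μ = Measure.map (fun ω => -(X ω)) μ

section Helpers
open Real Filter intervalIntegral
open Real Filter intervalIntegral

/-- derivative of `|y|^r` at nonzero points (any exponent) -/
lemma myHasDerivAt_abs_rpow_ne {r x : ℝ} (hx : x ≠ 0) :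
    HasDerivAt (fun y : ℝ => |y| ^ r) (r * x * |x| ^ (r - 2)) x := by
  rcases hx.lt_or_gt with h | h
  · have hd : HasDerivAt (fun y : ℝ => (-y) ^ r) (r * (-x) ^ (r - 1) * -1) x :=
      (Real.hasDerivAt_rpow_const (p := r) (Or.inl (by simpa using hx))).comp x (hasDerivAt_neg x)
    have he : (fun y : ℝ => |y| ^ r) =ᶠ[nhds x] fun y => (-y) ^ r :=
      Filter.eventuallyEq_of_mem (Iio_mem_nhds h) (fun y hy => by
        rw [abs_of_neg hy])
    refine (hd.congr_of_eventuallyEq he).congr_deriv ?_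
    have hx0 : (0:ℝ) < -x := by linarith
    rw [abs_of_neg h, show r - 1 = 1 + (r - 2) by ring, Real.rpow_add hx0, Real.rpow_one]
    ring
  · have hd : HasDerivAt (fun y : ℝ => y ^ r) (r * x ^ (r - 1)) x :=
      Real.hasDerivAt_rpow_const (p := r) (Or.inl (by linarith))
    have he : (fun y : ℝ => |y| ^ r) =ᶠ[nhds x] fun y => y ^ r :=
      Filter.eventuallyEq_of_mem (Ioi_mem_nhds h) (fun y hy => by
        rw [abs_of_pos hy])
    refine (hd.congr_of_eventuallyEq he).congr_deriv ?_
    rw [abs_of_pos h, show r - 1 = 1 + (r - 2) by ring, Real.rpow_add h, Real.rpow_one]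
    ring

/-- derivative of the odd power function `y ↦ y * |y|^q` -/
lemma myHasDerivAt_mul_abs_rpow {q : ℝ} (hq : 1 ≤ q) (x : ℝ) :
    HasDerivAt (fun y : ℝ => y * |y| ^ q) ((q + 1) * |x| ^ q) x := by
  rcases eq_or_ne x 0 with rfl | hx
  · rw [hasDerivAt_iff_tendsto_slope]
    have h0 : (fun h : ℝ => |h| ^ q) =ᶠ[nhdsWithin 0 {(0:ℝ)}ᶜ]
        slope (fun y : ℝ => y * |y| ^ q) 0 :=
      Filter.eventuallyEq_of_mem self_mem_nhdsWithin (fun h hh => by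
        have hh : h ≠ 0 := hh
        rw [slope_def_field]
        field_simp
        simp)
    have ht : Filter.Tendsto (fun h : ℝ => |h| ^ q) (nhds 0) (nhds 0) := by
      have : ContinuousAt (fun x : ℝ => |x| ^ q) 0 :=
        (Real.continuousAt_rpow_const |0| q (Or.inr (by linarith))).comp
          continuous_abs.continuousAt
      simpa [ContinuousAt, Real.zero_rpow (by linarith : q ≠ 0)] using this
    have := (ht.mono_left (nhdsWithin_le_nhds (s := {(0:ℝ)}ᶜ))).congr' h0
    simpa [Real.zero_rpow (by linarith : q ≠ 0)] using this
  · have hd := (hasDerivAt_id x).mul (myHasDerivAt_abs_rpow_ne (r := q) hx)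
    refine hd.congr_deriv ?_
    have h2 : |x| ^ (2:ℝ) = x ^ 2 := by
      rw [show ((2:ℝ)) = ((2:ℕ):ℝ) by norm_num, Real.rpow_natCast, sq_abs]
    simp only [id_eq, one_mul]
    have h3 : x * (q * x * |x| ^ (q - 2)) = q * (x^2 * |x| ^ (q-2)) := by ring
    rw [h3, ← h2, ← Real.rpow_add (abs_pos.2 hx)]
    ring_nf

lemma myConvexOn_abs_rpow {q : ℝ} (hq : 1 ≤ q) : ConvexOn ℝ Set.univ fun u : ℝ => |u| ^ q := by
  have hc := convexOn_rpow hq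
  refine ⟨convex_univ, fun x _ y _ t s ht hs hts => ?_⟩
  have h1 : |t • x + s • y| ^ q ≤ (t * |x| + s * |y|) ^ q := by
    apply Real.rpow_le_rpow (abs_nonneg _) _ (by linarith)
    calc |t • x + s • y| ≤ |t • x| + |s • y| := abs_add_le _ _
    _ = t * |x| + s * |y| := by
        simp [abs_mul, abs_of_nonneg ht, abs_of_nonneg hs, smul_eq_mul]
  refine h1.trans ?_
  have := hc.2 (Set.mem_Ici.2 (abs_nonneg x)) (Set.mem_Ici.2 (abs_nonneg y)) ht hs hts
  simpa [smul_eq_mul] using this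

/-- two-point spreading lemma for convex functions -/
lemma convex_two_point {g : ℝ → ℝ} (hg : ConvexOn ℝ Set.univ g) {lam b w : ℝ}
    (hl : 1 ≤ lam) (hw : 0 ≤ w) :
    g (b + w) + g (b - w) ≤ g (b + lam * w) + g (b - lam * w) := by
  have hl0 : 0 < lam := by linarith
  set t : ℝ := (1 + lam⁻¹) / 2 with ht
  have h1 : 0 ≤ t := by positivity
  have hinv : lam⁻¹ ≤ 1 := by
    rw [inv_le_one_iff₀]; right; exact hl
  have h2 : 0 ≤ 1 - t := by
    have : t ≤ 1 := by rw [ht]; linarith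
    linarith
  have hts : t + (1 - t) = 1 := by ring
  have e1 : t * (b + lam * w) + (1 - t) * (b - lam * w) = b + w := by
    rw [ht]
    field_simp
    ring
  have e2 : (1 - t) * (b + lam * w) + t * (b - lam * w) = b - w := by
    rw [ht]
    field_simp
    ring
  have i1 := hg.2 (Set.mem_univ (b + lam * w)) (Set.mem_univ (b - lam * w)) h1 h2 hts
  have i2 := hg.2 (Set.mem_univ (b + lam * w)) (Set.mem_univ (b - lam * w)) h2 h1 (by ring)
  simp only [smul_eq_mul] at i1 i2
  rw [e1] at i1
  rw [e2] at i2
  nlinarith [i1, i2]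

lemma cont_abs_rpow {q : ℝ} (hq : 0 ≤ q) : Continuous fun u : ℝ => |u| ^ q :=
  continuous_abs.rpow_const (fun _ => Or.inr hq)

/-- spreading inequality for integrals of convex functions over symmetric intervals -/
lemma integral_spread {q b m lam : ℝ} (hq : 1 ≤ q) (hm : 0 ≤ m) (hl : 1 ≤ lam) :
    (∫ w in (-m)..m, |b + w| ^ q) ≤ ∫ w in (-m)..m, |b + lam * w| ^ q := by
  have hq0 : (0:ℝ) ≤ q := by linarith
  have hcont : ∀ c : ℝ, Continuous fun w : ℝ => |b + c * w| ^ q := fun c =>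
    (cont_abs_rpow hq0).comp (by continuity)
  have hcont' : ∀ c : ℝ, Continuous fun w : ℝ => |b - c * w| ^ q := fun c =>
    (cont_abs_rpow hq0).comp (by continuity)
  have key : ∀ c : ℝ, (∫ w in (-m)..m, |b + c * w| ^ q)
      = ∫ w in (0:ℝ)..m, (|b + c * w| ^ q + |b - c * w| ^ q) := by
    intro c
    have h5 : (∫ w in (0:ℝ)..m, |b + c * -w| ^ q) = ∫ w in (-m)..(0:ℝ), |b + c * w| ^ q := by
      have := intervalIntegral.integral_comp_neg (a := (0:ℝ)) (b := m)
        (fun w => |b + c * w| ^ q)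
      simpa using this
    calc (∫ w in (-m)..m, |b + c * w| ^ q)
        = (∫ w in (-m)..(0:ℝ), |b + c * w| ^ q) + ∫ w in (0:ℝ)..m, |b + c * w| ^ q :=
          (intervalIntegral.integral_add_adjacent_intervals
            ((hcont c).intervalIntegrable _ _) ((hcont c).intervalIntegrable _ _)).symm
      _ = (∫ w in (0:ℝ)..m, |b - c * w| ^ q) + ∫ w in (0:ℝ)..m, |b + c * w| ^ q := by
          rw [← h5]
          congr 1
          apply intervalIntegral.integral_congr
          intro w _
          show |b + c * -w| ^ q = |b - c * w| ^ q
          have : b + c * -w = b - c * w := by ring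
          rw [this]
      _ = ∫ w in (0:ℝ)..m, (|b + c * w| ^ q + |b - c * w| ^ q) := by
          rw [← intervalIntegral.integral_add ((hcont' c).intervalIntegrable _ _)
            ((hcont c).intervalIntegrable _ _)]
          apply intervalIntegral.integral_congr
          intro w _
          ring
  have h1 : (∫ w in (-m)..m, |b + w| ^ q) = ∫ w in (-m)..m, |b + 1 * w| ^ q :=
    intervalIntegral.integral_congr (fun w _ => by rw [one_mul])
  rw [h1, key 1, key lam]
  apply intervalIntegral.integral_mono_on hm
  · exact ((hcont 1).add (hcont' 1)).intervalIntegrable _ _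
  · exact ((hcont lam).add (hcont' lam)).intervalIntegrable _ _
  intro w hw
  have := convex_two_point (myConvexOn_abs_rpow hq) (b := b) (w := w) hl hw.1
  simpa [one_mul] using this
noncomputable def phiFn (p : ℝ) (u : ℝ) : ℝ := u * |u| ^ (p - 2)

lemma cont_phiFn (p : ℝ) (hp : 3 ≤ p) : Continuous (phiFn p) :=
  continuous_id.mul (cont_abs_rpow (by linarith))

lemma ftc_phi {p : ℝ} (hp : 3 ≤ p) (x y : ℝ) :
    phiFn p y - phiFn p x = ∫ u in x..y, (p - 1) * |u| ^ (p - 2) := by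
  rw [intervalIntegral.integral_eq_sub_of_hasDerivAt
    (f := phiFn p) (f' := fun u => (p - 1) * |u| ^ (p - 2)) (fun u _ => ?_)
    ((continuous_const.mul (cont_abs_rpow (by linarith))).intervalIntegrable _ _)]
  have h := myHasDerivAt_mul_abs_rpow (q := p - 2) (by linarith) u
  refine h.congr_deriv ?_
  ring_nf

lemma keyK {p : ℝ} (hp : 3 ≤ p) {a b r R : ℝ} (ha : 0 ≤ a) (hr : 0 ≤ r) (hrR : r ≤ R) :
    R * (phiFn p (b + a * r) - phiFn p (b - a * r))
      ≤ r * (phiFn p (b + a * R) - phiFn p (b - a * R)) := by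
  rcases hr.eq_or_lt with rfl | hr0
  · simp
  rcases ha.eq_or_lt with rfl | ha0
  · simp
  have hR0 : 0 < R := lt_of_lt_of_le hr0 hrR
  set q : ℝ := p - 2 with hq
  have hq1 : (1:ℝ) ≤ q := by rw [hq]; linarith
  set lam : ℝ := R / r with hlam
  have hlam1 : 1 ≤ lam := (one_le_div hr0).2 hrR
  have hlam0 : lam ≠ 0 := by positivity
  set m : ℝ := a * r with hm
  have hm0 : 0 < m := by positivity
  -- representation of the increments as integrals
  have repr : ∀ s : ℝ, phiFn p (b + s) - phiFn p (b - s)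
      = (p - 1) * ∫ v in (-s)..s, |b + v| ^ q := by
    intro s
    rw [ftc_phi hp (b - s) (b + s)]
    rw [← intervalIntegral.integral_const_mul]
    have := intervalIntegral.integral_comp_add_left
      (a := -s) (b := s) (fun u => (p - 1) * |u| ^ q) b
    rw [this]
    congr 1 <;> ring
  have scale : (∫ v in (-(a*R))..(a*R), |b + v| ^ q)
      = lam * ∫ w in (-m)..m, |b + lam * w| ^ q := by
    have := intervalIntegral.integral_comp_mul_left
      (a := -m) (b := m) (fun v => |b + v| ^ q) hlam0
    rw [this]
    rw [smul_eq_mul, ← mul_assoc, mul_inv_cancel₀ hlam0, one_mul]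
    congr 1 <;> (rw [hlam, hm]; field_simp; try ring)
  have spread := integral_spread (q := q) (b := b) (m := m) (lam := lam) hq1 hm0.le hlam1
  have hIl : (∫ v in (-m)..m, |b + v| ^ q) ≤ lam * ∫ w in (-m)..m, |b + lam * w| ^ q := by
    calc (∫ v in (-m)..m, |b + v| ^ q) ≤ ∫ w in (-m)..m, |b + lam * w| ^ q := spread
    _ ≤ lam * ∫ w in (-m)..m, |b + lam * w| ^ q := by
        have hJ : 0 ≤ ∫ w in (-m)..m, |b + lam * w| ^ q :=
          intervalIntegral.integral_nonneg (by linarith)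
            (fun u _ => Real.rpow_nonneg (abs_nonneg _) q)
        nlinarith [hJ, hlam1]
  rw [repr (a * r), repr (a * R), scale]
  have hp1 : (0:ℝ) ≤ p - 1 := by linarith
  have h1 : R * ((p-1) * ∫ v in (-(a*r))..(a*r), |b + v| ^ q)
      = R * (p-1) * ∫ v in (-m)..m, |b + v| ^ q := by rw [hm]; ring
  have h2 : r * ((p-1) * (lam * ∫ w in (-m)..m, |b + lam * w| ^ q))
      = R * (p-1) * ∫ w in (-m)..m, |b + lam * w| ^ q := by
    rw [hlam]; field_simp
  rw [h1, h2]
  have := mul_le_mul_of_nonneg_left spread (by positivity : (0:ℝ) ≤ R * (p-1))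
  linarith
/-- the tangent-line inequality at `s = 1` for `a, x ≥ 0` -/
lemma scalar_tangent_nonneg {p : ℝ} (hp : 3 ≤ p) {a b x : ℝ} (ha : 0 ≤ a) (hx : 0 ≤ x) :
    |b + a| ^ p / 2 + |b - a| ^ p / 2
      + p * a / 4 * (phiFn p (b + a) - phiFn p (b - a)) * (x ^ 2 - 1)
    ≤ |b + a * x| ^ p / 2 + |b - a * x| ^ p / 2 := by
  have hp1 : (1:ℝ) < p := by linarith
  set c : ℝ := p * a / 4 * (phiFn p (b + a) - phiFn p (b - a)) with hc
  set D : ℝ → ℝ := fun s => |b + a * s| ^ p / 2 + |b - a * s| ^ p / 2 - c * s ^ 2 with hD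
  set D' : ℝ → ℝ := fun s => p * a / 2 * (phiFn p (b + a * s) - phiFn p (b - a * s))
      - 2 * c * s with hD'
  have hderiv : ∀ s : ℝ, HasDerivAt D (D' s) s := by
    intro s
    have h1 : HasDerivAt (fun s : ℝ => b + a * s) a s := by
      simpa using ((hasDerivAt_id s).const_mul a).const_add b
    have h2 : HasDerivAt (fun s : ℝ => b - a * s) (-a) s := by
      simpa using ((hasDerivAt_id s).const_mul (-a)).const_add b |>.congr_of_eventuallyEq
        (by filter_upwards with y; simp only [id_eq]; ring)
    have hΦ1 : HasDerivAt (fun s : ℝ => |b + a * s| ^ p)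
        (p * |b + a * s| ^ (p - 2) * (b + a * s) * a) s := by
      have := (hasDerivAt_abs_rpow (b + a * s) hp1).comp s h1
      simpa [mul_assoc, Function.comp_def] using this
    have hΦ2 : HasDerivAt (fun s : ℝ => |b - a * s| ^ p)
        (p * |b - a * s| ^ (p - 2) * (b - a * s) * (-a)) s := by
      have := (hasDerivAt_abs_rpow (b - a * s) hp1).comp s h2
      simpa [mul_assoc, Function.comp_def] using this
    have hsq : HasDerivAt (fun s : ℝ => c * s ^ 2) (c * (2 * s)) s := by
      simpa using (hasDerivAt_pow 2 s).const_mul c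
    have := ((hΦ1.div_const 2).add (hΦ2.div_const 2)).sub hsq
    refine this.congr_deriv ?_
    simp only [hD', phiFn]
    ring
  have hcont : Continuous D' := by
    have hφ : Continuous (phiFn p) := cont_phiFn p hp
    apply Continuous.sub
    · exact continuous_const.mul ((hφ.comp (by continuity)).sub (hφ.comp (by continuity)))
    · continuity
  have hftc : ∀ u v : ℝ, D v - D u = ∫ r in u..v, D' r := fun u v =>
    (intervalIntegral.integral_eq_sub_of_hasDerivAt (fun r _ => hderiv r)
      (hcont.intervalIntegrable _ _)).symm
  have hsign_ge : ∀ r : ℝ, 1 ≤ r → 0 ≤ D' r := by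
    intro r hr
    have hK := keyK hp (a := a) (b := b) ha (by norm_num : (0:ℝ) ≤ 1) hr
    simp only [mul_one] at hK
    have := mul_le_mul_of_nonneg_left hK (by positivity : (0:ℝ) ≤ p * a / 2)
    simp only [hD', hc]
    nlinarith [this]
  have hsign_le : ∀ r : ℝ, 0 ≤ r → r ≤ 1 → D' r ≤ 0 := by
    intro r hr0 hr1
    have hK := keyK hp (a := a) (b := b) ha hr0 hr1
    simp only [mul_one, one_mul] at hK
    have := mul_le_mul_of_nonneg_left hK (by positivity : (0:ℝ) ≤ p * a / 2)
    simp only [hD', hc]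
    nlinarith [this]
  have hmain : D 1 ≤ D x := by
    rcases le_or_gt 1 x with h1x | h1x
    · have := hftc 1 x
      have hpos : 0 ≤ ∫ r in (1:ℝ)..x, D' r :=
        intervalIntegral.integral_nonneg h1x (fun u hu => hsign_ge u hu.1)
      linarith
    · have := hftc x 1
      have hneg : (∫ r in x..(1:ℝ), D' r) ≤ 0 := by
        rw [← neg_nonneg, ← intervalIntegral.integral_neg]
        exact intervalIntegral.integral_nonneg h1x.le
          (fun u hu => by simpa using hsign_le u (le_trans hx hu.1) hu.2)
      linarith
  simp only [hD] at hmain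
  simp only [hc, mul_one, one_pow] at hmain ⊢
  linarith [hmain]

/-- the tangent-line inequality at `s = 1`, general version -/
lemma scalar_tangent {p : ℝ} (hp : 3 ≤ p) (a b x : ℝ) :
    |b + a| ^ p / 2 + |b - a| ^ p / 2
      + p * a / 4 * (phiFn p (b + a) - phiFn p (b - a)) * (x ^ 2 - 1)
    ≤ |b + a * x| ^ p / 2 + |b - a * x| ^ p / 2 := by
  -- reduce to `x ≥ 0`
  have hx : ∀ a' : ℝ, 0 ≤ a' → ∀ x' : ℝ,
      |b + a'| ^ p / 2 + |b - a'| ^ p / 2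
        + p * a' / 4 * (phiFn p (b + a') - phiFn p (b - a')) * (x' ^ 2 - 1)
      ≤ |b + a' * x'| ^ p / 2 + |b - a' * x'| ^ p / 2 := by
    intro a' ha' x'
    rcases le_or_gt 0 x' with h | h
    · exact scalar_tangent_nonneg hp ha' h
    · have h0 := scalar_tangent_nonneg hp (a := a') (b := b) (x := -x') ha' (by linarith)
      rw [neg_sq] at h0
      have e1 : b + a' * -x' = b - a' * x' := by ring
      have e2 : b - a' * -x' = b + a' * x' := by ring
      rw [e1, e2] at h0
      linarith
  rcases le_or_gt 0 a with h | h
  · exact hx a h x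
  · have h0 := hx (-a) (by linarith) x
    have e1 : b + -a = b - a := by ring
    have e2 : b - -a = b + a := by ring
    have e3 : b + -a * x = b - a * x := by ring
    have e4 : b - -a * x = b + a * x := by ring
    rw [e1, e2, e3, e4] at h0
    linarith
open MeasureTheory in
/-- one-dimensional comparison: a symmetric distribution with second moment 1
dominates a Rademacher sign. -/
lemma onedim {p : ℝ} (hp : 3 ≤ p) (ρ : Measure ℝ) [IsProbabilityMeasure ρ]
    (hsymm : Measure.map (fun x => -x) ρ = ρ) (hvar : ∫ x, x ^ 2 ∂ρ = 1) (a b : ℝ) :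
    2⁻¹ * ENNReal.ofReal (|b + a| ^ p) + 2⁻¹ * ENNReal.ofReal (|b - a| ^ p)
      ≤ ∫⁻ x, ENNReal.ofReal (|b + a * x| ^ p) ∂ρ := by
  have hp0 : (0:ℝ) ≤ p := by linarith
  have hcont : Continuous fun x : ℝ => |b + a * x| ^ p :=
    (cont_abs_rpow hp0).comp (by continuity)
  have hcont' : Continuous fun x : ℝ => |b - a * x| ^ p :=
    (cont_abs_rpow hp0).comp (by continuity)
  have hnn : ∀ x : ℝ, 0 ≤ |b + a * x| ^ p := fun x => Real.rpow_nonneg (abs_nonneg _) p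
  have hnn' : ∀ x : ℝ, 0 ≤ |b - a * x| ^ p := fun x => Real.rpow_nonneg (abs_nonneg _) p
  by_cases htop : (∫⁻ x, ENNReal.ofReal (|b + a * x| ^ p) ∂ρ) = ⊤
  · rw [htop]; exact le_top
  -- integrability
  have hf : Integrable (fun x => |b + a * x| ^ p) ρ := by
    refine ⟨hcont.aestronglyMeasurable, ?_⟩
    rw [hasFiniteIntegral_iff_ofReal (Filter.Eventually.of_forall hnn)]
    exact lt_top_iff_ne_top.2 htop
  have hg : Integrable (fun x => |b - a * x| ^ p) ρ := by
    have h1 : Integrable (fun x => |b + a * x| ^ p) (Measure.map (fun x : ℝ => -x) ρ) := by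
      rw [hsymm]; exact hf
    have h2 := (integrable_map_measure hcont.aestronglyMeasurable
      measurable_neg.aemeasurable).mp h1
    refine h2.congr (Filter.Eventually.of_forall fun x => ?_)
    simp only [Function.comp]
    congr 2
    ring
  have hsq : Integrable (fun x : ℝ => x ^ 2) ρ := by
    by_contra hcon
    rw [integral_undef hcon] at hvar
    norm_num at hvar
  -- the symmetrized integral
  have hmapint : ∫ x, |b - a * x| ^ p ∂ρ = ∫ x, |b + a * x| ^ p ∂ρ := by
    conv_rhs => rw [← hsymm]
    rw [integral_map measurable_neg.aemeasurable hcont.aestronglyMeasurable]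
    apply MeasureTheory.integral_congr_ae
    filter_upwards with x
    congr 2
    ring
  -- the real inequality
  set c : ℝ := p * a / 4 * (phiFn p (b + a) - phiFn p (b - a)) with hc
  have h2 : Integrable (fun x : ℝ => c * (x ^ 2 - 1)) ρ :=
    (hsq.sub (integrable_const 1)).const_mul c
  have hlin : Integrable (fun x : ℝ => |b + a| ^ p / 2 + |b - a| ^ p / 2 + c * (x ^ 2 - 1)) ρ :=
    (integrable_const _).add h2
  have hadd : Integrable (fun x : ℝ => |b + a * x| ^ p / 2 + |b - a * x| ^ p / 2) ρ :=
    (hf.div_const 2).add (hg.div_const 2)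
  have hmono := integral_mono hlin hadd (fun x => scalar_tangent hp a b x)
  have hlhs : ∫ x, (|b + a| ^ p / 2 + |b - a| ^ p / 2 + c * (x ^ 2 - 1)) ∂ρ
      = |b + a| ^ p / 2 + |b - a| ^ p / 2 := by
    rw [integral_add (integrable_const _) h2, MeasureTheory.integral_const, MeasureTheory.integral_const_mul,
      integral_sub hsq (integrable_const 1), MeasureTheory.integral_const, hvar]
    simp
  have hrhs : ∫ x, (|b + a * x| ^ p / 2 + |b - a * x| ^ p / 2) ∂ρ = ∫ x, |b + a * x| ^ p ∂ρ := by
    rw [integral_add (hf.div_const 2) (hg.div_const 2), MeasureTheory.integral_div,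
      MeasureTheory.integral_div, hmapint]
    ring
  rw [hlhs, hrhs] at hmono
  -- convert to lintegral
  have hlint : ∫⁻ x, ENNReal.ofReal (|b + a * x| ^ p) ∂ρ
      = ENNReal.ofReal (∫ x, |b + a * x| ^ p ∂ρ) :=
    (ofReal_integral_eq_lintegral_ofReal hf (Filter.Eventually.of_forall hnn)).symm
  rw [hlint]
  calc 2⁻¹ * ENNReal.ofReal (|b + a| ^ p) + 2⁻¹ * ENNReal.ofReal (|b - a| ^ p)
      = ENNReal.ofReal (|b + a| ^ p / 2 + |b - a| ^ p / 2) := by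
        rw [ENNReal.ofReal_add (by positivity) (by positivity)]
        rw [ENNReal.ofReal_div_of_pos (by norm_num), ENNReal.ofReal_div_of_pos (by norm_num)]
        rw [ENNReal.ofReal_ofNat]
        rw [div_eq_mul_inv, div_eq_mul_inv, mul_comm, mul_comm (ENNReal.ofReal (|b - a| ^ p))]
    _ ≤ ENNReal.ofReal (∫ x, |b + a * x| ^ p ∂ρ) := ENNReal.ofReal_le_ofReal hmono
open MeasureTheory ProbabilityTheory
open scoped ENNReal

noncomputable def Kfun (p : ℝ) (θ : Measure ℝ) (b : ℝ) : ℝ≥0∞ :=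
  ∫⁻ t, ENNReal.ofReal (|b + t| ^ p) ∂θ

lemma Kfun_congr (p : ℝ) (θ : Measure ℝ) {u v : ℝ} (h : u = v) : Kfun p θ u = Kfun p θ v := by
  rw [h]

lemma meas_inner {p : ℝ} (hp : 0 ≤ p) (b : ℝ) :
    Measurable fun t : ℝ => ENNReal.ofReal (|b + t| ^ p) :=
  ENNReal.measurable_ofReal.comp ((cont_abs_rpow hp).comp (by continuity)).measurable

lemma meas_inner2 {p : ℝ} (hp : 0 ≤ p) :
    Measurable fun z : ℝ × ℝ => ENNReal.ofReal (|z.1 + z.2| ^ p) :=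
  ENNReal.measurable_ofReal.comp ((cont_abs_rpow hp).comp (by continuity)).measurable

lemma measurable_Kfun {p : ℝ} (hp : 0 ≤ p) (θ : Measure ℝ) [SFinite θ] :
    Measurable (Kfun p θ) :=
  Measurable.lintegral_prod_right' (meas_inner2 hp)

/-- convolution of `θ` with a `±a` Bernoulli -/
noncomputable def convM (a : ℝ) (θ : Measure ℝ) : Measure ℝ :=
  (2:ℝ≥0∞)⁻¹ • Measure.map (fun t => t + a) θ + (2:ℝ≥0∞)⁻¹ • Measure.map (fun t => t - a) θ

instance convM_prob (a : ℝ) (θ : Measure ℝ) [IsProbabilityMeasure θ] :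
    IsProbabilityMeasure (convM a θ) := by
  haveI h1 : IsProbabilityMeasure (Measure.map (fun t : ℝ => t + a) θ) :=
    Measure.isProbabilityMeasure_map (measurable_add_const a).aemeasurable
  haveI h2 : IsProbabilityMeasure (Measure.map (fun t : ℝ => t - a) θ) :=
    Measure.isProbabilityMeasure_map (measurable_sub_const a).aemeasurable
  constructor
  simp [convM, measure_univ, ENNReal.inv_two_add_inv_two]

lemma Kfun_convM {p : ℝ} (hp : 0 ≤ p) (a : ℝ) (θ : Measure ℝ) (b : ℝ) :
    Kfun p (convM a θ) b = 2⁻¹ * Kfun p θ (b + a) + 2⁻¹ * Kfun p θ (b - a) := by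
  unfold Kfun convM
  rw [lintegral_add_measure, lintegral_smul_measure, lintegral_smul_measure,
    lintegral_map (meas_inner hp b) (measurable_add_const a),
    lintegral_map (meas_inner hp b) (measurable_sub_const a)]
  congr 1
  · congr 1
    apply lintegral_congr
    intro t
    congr 2
    ring
  · congr 1
    apply lintegral_congr
    intro t
    congr 2
    ring

lemma lintegral_rademacherLaw (g : ℝ → ℝ≥0∞) :
    ∫⁻ x, g x ∂rademacherLaw = 2⁻¹ * g 1 + 2⁻¹ * g (-1) := by
  unfold rademacherLaw
  rw [lintegral_add_measure, lintegral_smul_measure, lintegral_smul_measure,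
    lintegral_dirac, lintegral_dirac]
  simp [one_div]

/-- key one-dimensional comparison in convolved form -/
lemma onedim_K {p : ℝ} (hp : 3 ≤ p) (ρ : Measure ℝ) [IsProbabilityMeasure ρ]
    (hsymm : Measure.map (fun x => -x) ρ = ρ) (hvar : ∫ x, x ^ 2 ∂ρ = 1)
    (θ : Measure ℝ) [IsProbabilityMeasure θ] (a b : ℝ) :
    Kfun p (convM a θ) b ≤ ∫⁻ x, Kfun p θ (a * x + b) ∂ρ := by
  have hp0 : (0:ℝ) ≤ p := by linarith
  have hswap : ∫⁻ x, Kfun p θ (a * x + b) ∂ρ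
      = ∫⁻ t, ∫⁻ x, ENNReal.ofReal (|a * x + b + t| ^ p) ∂ρ ∂θ := by
    unfold Kfun
    exact lintegral_lintegral_swap
      ((ENNReal.measurable_ofReal.comp
        ((cont_abs_rpow hp0).comp (by continuity)).measurable).aemeasurable)
  rw [hswap, Kfun_convM hp0]
  unfold Kfun
  have e1 : (2:ℝ≥0∞)⁻¹ * ∫⁻ t, ENNReal.ofReal (|b + a + t| ^ p) ∂θ
      = ∫⁻ t, 2⁻¹ * ENNReal.ofReal (|b + t + a| ^ p) ∂θ := by
    rw [← lintegral_const_mul _ (meas_inner hp0 (b + a))]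
    apply lintegral_congr
    intro t
    congr 3
    ring
  have e2 : (2:ℝ≥0∞)⁻¹ * ∫⁻ t, ENNReal.ofReal (|b - a + t| ^ p) ∂θ
      = ∫⁻ t, 2⁻¹ * ENNReal.ofReal (|b + t - a| ^ p) ∂θ := by
    rw [← lintegral_const_mul _ (meas_inner hp0 (b - a))]
    apply lintegral_congr
    intro t
    congr 3
    ring
  rw [e1, e2, ← lintegral_add_left]
  swap
  · exact (ENNReal.measurable_ofReal.comp
      ((cont_abs_rpow hp0).comp (by continuity)).measurable).const_mul _
  apply lintegral_mono
  intro t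
  have h1 := onedim hp ρ hsymm hvar a (b + t)
  calc 2⁻¹ * ENNReal.ofReal (|b + t + a| ^ p) + 2⁻¹ * ENNReal.ofReal (|b + t - a| ^ p)
      ≤ ∫⁻ x, ENNReal.ofReal (|b + t + a * x| ^ p) ∂ρ := h1
    _ = ∫⁻ x, ENNReal.ofReal (|a * x + b + t| ^ p) ∂ρ := by
        apply lintegral_congr
        intro x
        congr 2
        ring
lemma step_eq {p : ℝ} (hp0 : 0 ≤ p) {Ω : Type*} [MeasurableSpace Ω]
    (P : Measure Ω) [IsProbabilityMeasure P]
    (Y : ℕ → Ω → ℝ) (hm : ∀ i, Measurable (Y i))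
    (hind : iIndepFun Y P)
    (a : ℕ → ℝ) {s : Finset ℕ} {j : ℕ} (hj : j ∉ s) (θ : Measure ℝ) [IsProbabilityMeasure θ] :
    ∫⁻ ω, Kfun p θ (∑ i ∈ insert j s, a i * Y i ω) ∂P
      = ∫⁻ ω, ∫⁻ x, Kfun p θ (a j * x + ∑ i ∈ s, a i * Y i ω) ∂(Measure.map (Y j) P) ∂P := by
  classical
  set T : Ω → ℝ := fun ω => ∑ i ∈ s, a i * Y i ω with hT
  have hTmeas : Measurable T := Finset.measurable_sum s (fun i _ => (hm i).const_mul (a i))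
  set Z : Ω → ℝ := fun ω => a j * Y j ω with hZ
  have hZmeas : Measurable Z := (hm j).const_mul (a j)
  -- independence of T and Z
  have hfam : iIndepFun (fun i => fun ω => a i * Y i ω) P :=
    hind.comp (fun i => fun x : ℝ => a i * x) (fun i => measurable_id.const_mul (a i))
  have hTZ : IndepFun T Z P := by
    have h := hfam.indepFun_finsetSum_of_notMem
      (fun i => (hm i).const_mul (a i)) hj
    have he : (∑ i ∈ s, fun ω => a i * Y i ω) = T := by
      funext ω
      simp [hT, Finset.sum_apply]
    rwa [he] at h
  -- the two-variable function
  set H : ℝ × ℝ → ℝ≥0∞ := fun z => Kfun p θ (z.2 + z.1) with hH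
  have hHmeas : Measurable H :=
    (measurable_Kfun hp0 θ).comp (measurable_snd.add measurable_fst)
  haveI hPT : IsProbabilityMeasure (Measure.map T P) :=
    Measure.isProbabilityMeasure_map hTmeas.aemeasurable
  haveI hPZ : IsProbabilityMeasure (Measure.map Z P) :=
    Measure.isProbabilityMeasure_map hZmeas.aemeasurable
  haveI hPYj : IsProbabilityMeasure (Measure.map (Y j) P) :=
    Measure.isProbabilityMeasure_map (hm j).aemeasurable
  have hmapeq : Measure.map (fun ω => (T ω, Z ω)) P = (Measure.map T P).prod (Measure.map Z P) :=
    (indepFun_iff_map_prod_eq_prod_map_map hTmeas.aemeasurable hZmeas.aemeasurable).mp hTZ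
  calc ∫⁻ ω, Kfun p θ (∑ i ∈ insert j s, a i * Y i ω) ∂P
      = ∫⁻ ω, H (T ω, Z ω) ∂P := by
        apply lintegral_congr
        intro ω
        exact Kfun_congr p θ (Finset.sum_insert hj)
    _ = ∫⁻ z, H z ∂(Measure.map (fun ω => (T ω, Z ω)) P) :=
        (lintegral_map hHmeas (hTmeas.prodMk hZmeas)).symm
    _ = ∫⁻ z, H z ∂((Measure.map T P).prod (Measure.map Z P)) := by rw [hmapeq]
    _ = ∫⁻ b, ∫⁻ x, H (b, x) ∂(Measure.map Z P) ∂(Measure.map T P) :=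
        lintegral_prod H hHmeas.aemeasurable
    _ = ∫⁻ ω, ∫⁻ x, H (T ω, x) ∂(Measure.map Z P) ∂P :=
        lintegral_map (hHmeas.lintegral_prod_right') hTmeas
    _ = ∫⁻ ω, ∫⁻ x, Kfun p θ (a j * x + T ω) ∂(Measure.map (Y j) P) ∂P := by
        apply lintegral_congr
        intro ω
        have hmm : Measure.map Z P = Measure.map (fun x => a j * x) (Measure.map (Y j) P) :=
          (Measure.map_map (measurable_id.const_mul (a j)) (hm j)).symm
        rw [hmm, lintegral_map _ (show Measurable fun x : ℝ => a j * x from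
          measurable_id.const_mul (a j))]
        · exact (measurable_Kfun hp0 θ).comp (measurable_id.add_const (T ω))

end Helpers

section Compare
open MeasureTheory ProbabilityTheory

lemma compare {p : ℝ} (hp : 3 ≤ p)
    {Ω Ω' : Type*} [MeasurableSpace Ω] [MeasurableSpace Ω']
    (μ : Measure Ω) (ν : Measure Ω') [IsProbabilityMeasure μ] [IsProbabilityMeasure ν]
    (X : ℕ → Ω → ℝ) (hXmeas : ∀ i, Measurable (X i))
    (hXindep : iIndepFun X μ)
    (hXsymm : ∀ i, IsSymmetricRV (X i) μ)
    (hXvar : ∀ i, ∫ ω, (X i ω) ^ 2 ∂μ = 1)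
    (ε : ℕ → Ω' → ℝ) (hεmeas : ∀ i, Measurable (ε i))
    (hεindep : iIndepFun ε ν)
    (hεlaw : ∀ i, Measure.map (ε i) ν = rademacherLaw)
    (a : ℕ → ℝ) (s : Finset ℕ) :
    ∀ (θ : Measure ℝ), IsProbabilityMeasure θ →
      ∫⁻ ω', Kfun p θ (∑ i ∈ s, a i * ε i ω') ∂ν
        ≤ ∫⁻ ω, Kfun p θ (∑ i ∈ s, a i * X i ω) ∂μ := by
  have hp0 : (0:ℝ) ≤ p := by linarith
  classical
  induction s using Finset.induction_on with
  | empty =>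
      intro θ hθ
      simp [lintegral_const, measure_univ]
  | @insert j s hj ih =>
      intro θ hθ
      haveI := hθ
      rw [step_eq hp0 ν ε hεmeas hεindep a hj θ, step_eq hp0 μ X hXmeas hXindep a hj θ]
      have hradint : ∀ b : ℝ, (∫⁻ x, Kfun p θ (a j * x + b) ∂(Measure.map (ε j) ν))
          = Kfun p (convM (a j) θ) b := by
        intro b
        rw [hεlaw j, lintegral_rademacherLaw, Kfun_convM hp0]
        congr 1
        · exact congrArg (fun z => 2⁻¹ * z) (Kfun_congr p θ (by ring))
        · exact congrArg (fun z => 2⁻¹ * z) (Kfun_congr p θ (by ring))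
      calc ∫⁻ ω', ∫⁻ x, Kfun p θ (a j * x + ∑ i ∈ s, a i * ε i ω')
              ∂(Measure.map (ε j) ν) ∂ν
          = ∫⁻ ω', Kfun p (convM (a j) θ) (∑ i ∈ s, a i * ε i ω') ∂ν := by
            apply lintegral_congr
            intro ω'
            exact hradint _
        _ ≤ ∫⁻ ω, Kfun p (convM (a j) θ) (∑ i ∈ s, a i * X i ω) ∂μ :=
            ih (convM (a j) θ) inferInstance
        _ ≤ ∫⁻ ω, ∫⁻ x, Kfun p θ (a j * x + ∑ i ∈ s, a i * X i ω)
              ∂(Measure.map (X j) μ) ∂μ := by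
            apply lintegral_mono
            intro ω
            haveI : IsProbabilityMeasure (Measure.map (X j) μ) :=
              Measure.isProbabilityMeasure_map (hXmeas j).aemeasurable
            have hsym' : Measure.map (fun x => -x) (Measure.map (X j) μ)
                = Measure.map (X j) μ := by
              rw [Measure.map_map measurable_neg (hXmeas j)]
              exact (hXsymm j).symm
            have hvar' : ∫ x, x ^ 2 ∂(Measure.map (X j) μ) = 1 := by
              rw [integral_map (hXmeas j).aemeasurable (continuous_pow 2).aestronglyMeasurable]
              exact hXvar j
            exact onedim_K hp (Measure.map (X j) μ) hsym' hvar' θ (a j) _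

end Compare

/-- for `p ≥ 3`, independent symmetric `X_i` with `E X_i^2 = 1`, and
independent Rademacher `ε_i`, one has `‖∑ aᵢ εᵢ‖_p ≤ ‖∑ aᵢ Xᵢ‖_p`
(norms taken in `ℝ≥0∞` via `eLpNorm`). -/
theorem stmt0
    {Ω Ω' : Type*} [MeasurableSpace Ω] [MeasurableSpace Ω']
    (μ : Measure Ω) (ν : Measure Ω') [IsProbabilityMeasure μ] [IsProbabilityMeasure ν]
    (p : ℝ) (hp : 3 ≤ p) (n : ℕ)
    (X : ℕ → Ω → ℝ) (hXmeas : ∀ i, Measurable (X i))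
    (hXindep : iIndepFun X μ)
    (hXsymm : ∀ i, IsSymmetricRV (X i) μ)
    (hXvar : ∀ i, ∫ ω, (X i ω) ^ 2 ∂μ = 1)
    (ε : ℕ → Ω' → ℝ) (hεmeas : ∀ i, Measurable (ε i))
    (hεindep : iIndepFun ε ν)
    (hεlaw : ∀ i, Measure.map (ε i) ν = rademacherLaw)
    (a : ℕ → ℝ) :
    eLpNorm (fun ω' => ∑ i ∈ Finset.Icc 1 n, a i * ε i ω') (ENNReal.ofReal p) ν ≤
      eLpNorm (fun ω => ∑ i ∈ Finset.Icc 1 n, a i * X i ω) (ENNReal.ofReal p) μ := by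
  have hp0 : (0:ℝ) < p := by linarith
  have hne : ENNReal.ofReal p ≠ 0 := ne_of_gt (ENNReal.ofReal_pos.2 hp0)
  have hnt : ENNReal.ofReal p ≠ ∞ := ENNReal.ofReal_ne_top
  rw [eLpNorm_eq_lintegral_rpow_enorm_toReal hne hnt, eLpNorm_eq_lintegral_rpow_enorm_toReal hne hnt,
    ENNReal.toReal_ofReal hp0.le]
  apply ENNReal.rpow_le_rpow _ (by positivity)
  have hconv : ∀ r : ℝ, (‖r‖ₑ) ^ p = ENNReal.ofReal (|r| ^ p) := fun r => by
    rw [Real.enorm_eq_ofReal_abs, ENNReal.ofReal_rpow_of_nonneg (abs_nonneg r) hp0.le]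
  have hK0 : ∀ b : ℝ, Kfun p (Measure.dirac 0) b = ENNReal.ofReal (|b| ^ p) := by
    intro b
    unfold Kfun
    rw [lintegral_dirac]
    norm_num
  have hcomp := compare hp μ ν X hXmeas hXindep hXsymm hXvar ε hεmeas hεindep hεlaw a
    (Finset.Icc 1 n) (Measure.dirac 0) inferInstance
  calc ∫⁻ ω', ‖∑ i ∈ Finset.Icc 1 n, a i * ε i ω'‖ₑ ^ p ∂ν
      = ∫⁻ ω', Kfun p (Measure.dirac 0) (∑ i ∈ Finset.Icc 1 n, a i * ε i ω') ∂ν := by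
        apply lintegral_congr
        intro ω'
        rw [hconv, hK0]
    _ ≤ ∫⁻ ω, Kfun p (Measure.dirac 0) (∑ i ∈ Finset.Icc 1 n, a i * X i ω) ∂μ := hcomp
    _ = ∫⁻ ω, ‖∑ i ∈ Finset.Icc 1 n, a i * X i ω‖ₑ ^ p ∂μ := by
        apply lintegral_congr
        intro ω
        rw [hconv, hK0]
end

section
/- Let a_1,…,a_n be real numbers with |a_1| ≥ |a_2| ≥ … ≥ |a_n|. Then for every real number t: ∏_{i=1}^n cos(a_i t) + (1/2) a_1^2 t^2 ≥ ∏_{i=2}^n 1/(1 + a_i^2 t^2 / 2). -/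
open Real

/-- if `|a₁| ≥ |a₂| ≥ … ≥ |aₙ|` then for every real `t`,
`∏_{i=1}^n cos(aᵢ t) + a₁² t² / 2 ≥ ∏_{i=2}^n 1/(1 + aᵢ² t² / 2)`. -/
theorem stmt3 (n : ℕ) (hn : 1 ≤ n) (a : ℕ → ℝ)
    (hmono : ∀ i j, 1 ≤ i → i ≤ j → j ≤ n → |a j| ≤ |a i|) (t : ℝ) :
    (∏ i ∈ Finset.Icc 1 n, Real.cos (a i * t)) + (a 1) ^ 2 * t ^ 2 / 2 ≥
      ∏ i ∈ Finset.Icc 2 n, (1 + (a i) ^ 2 * t ^ 2 / 2)⁻¹ := by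
  induction n, hn using Nat.le_induction with
  | base =>
      simp only [Finset.Icc_self, Finset.prod_singleton, show Finset.Icc 2 1 = ∅ by rfl,
        Finset.prod_empty]
      have h := Real.one_sub_sq_div_two_le_cos (x := a 1 * t)
      nlinarith [sq_nonneg (a 1 * t), mul_pow (a 1) t 2]
  | succ n hn ih =>
      have hmono' : ∀ i j, 1 ≤ i → i ≤ j → j ≤ n → |a j| ≤ |a i| := fun i j h1 h2 h3 =>
        hmono i j h1 h2 (h3.trans (Nat.le_succ n))
      have IH := ih hmono'
      set P := ∏ i ∈ Finset.Icc 1 n, Real.cos (a i * t) with hP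
      set Q := ∏ i ∈ Finset.Icc 2 n, (1 + (a i) ^ 2 * t ^ 2 / 2)⁻¹ with hQ
      have hsplit1 : (∏ i ∈ Finset.Icc 1 (n+1), Real.cos (a i * t))
          = P * Real.cos (a (n+1) * t) := Finset.prod_Icc_succ_top (by omega) _
      have hsplit2 : (∏ i ∈ Finset.Icc 2 (n+1), (1 + (a i) ^ 2 * t ^ 2 / 2)⁻¹)
          = Q * (1 + (a (n+1)) ^ 2 * t ^ 2 / 2)⁻¹ := Finset.prod_Icc_succ_top (by omega) _
      rw [hsplit1, hsplit2]
      -- basic facts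
      have hQ0 : 0 < Q := Finset.prod_pos (fun i _ => by positivity)
      have hQ1 : Q ≤ 1 := Finset.prod_le_one (fun i _ => by positivity)
        (fun i _ => by
          exact inv_le_one_of_one_le₀ (le_add_of_nonneg_right (by positivity)))
      have hPabs : |P| ≤ 1 := by
        rw [hP, Finset.abs_prod]
        exact Finset.prod_le_one (fun i _ => abs_nonneg _)
          (fun i _ => Real.abs_cos_le_one _)
      have hP1 : P ≤ 1 := (le_abs_self P).trans hPabs
      have hPm1 : -1 ≤ P := by
        have := neg_abs_le P; linarith [hPabs]
      set c : ℝ := a (n+1) * t with hc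
      set x : ℝ := (a (n+1)) ^ 2 * t ^ 2 / 2 with hx
      set A : ℝ := (a 1) ^ 2 * t ^ 2 / 2 with hA
      have hxc : x = c ^ 2 / 2 := by rw [hx, hc]; ring
      have hx0 : 0 ≤ x := by positivity
      have hxA : x ≤ A := by
        have h := hmono 1 (n+1) le_rfl (by omega) le_rfl
        have h2 : (a (n+1))^2 ≤ (a 1)^2 := by
          rw [← sq_abs (a (n+1)), ← sq_abs (a 1)]
          exact pow_le_pow_left₀ (abs_nonneg _) h 2
        rw [hx, hA]
        nlinarith [sq_nonneg t]
      set R : ℝ := (1 + x)⁻¹ with hR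
      have hR0 : 0 < R := by rw [hR]; positivity
      have hRmul : R * (1 + x) = 1 := inv_mul_cancel₀ (by positivity)
      have hR1 : R ≤ 1 := by
        rw [hR]; exact inv_le_one_of_one_le₀ (by linarith)
      set C : ℝ := Real.cos c with hC
      have hcos1 : C ≤ 1 := Real.cos_le_one c
      have hcosl : 1 - x ≤ C := by
        rw [hC, hxc]; exact Real.one_sub_sq_div_two_le_cos
      clear_value P Q c x A R C
      clear hP hQ hc hx hA hR hC hsplit1 hsplit2 hxc ih hmono hmono'
      -- goal: P * cos c + A ≥ Q * R
      rcases le_or_gt P 0 with hPle | hPpos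
      · have h1 : P ≤ P * C := by nlinarith
        have h2 : Q * R ≤ Q := by nlinarith
        linarith [IH]
      · rcases le_or_gt x 1 with hxle | hxgt
        · have h1 : P * (1 - x) ≤ P * C :=
            mul_le_mul_of_nonneg_left hcosl hPpos.le
          have h2 : (Q - A) * (1 - x) ≤ P * (1 - x) := by
            nlinarith [IH]
          -- need (Q - A)(1-x) + A ≥ Q * R, multiply by (1+x)
          have key : Q * R ≤ (Q - A) * (1 - x) + A := by
            have expand : (Q * R) * (1 + x) = Q := by
              rw [show Q * R * (1 + x) = Q * (R * (1+x)) by ring, hRmul, mul_one]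
            nlinarith [mul_nonneg hx0 (sub_nonneg.2 hxA), mul_nonneg hx0 hx0,
              mul_nonneg (mul_nonneg hx0 hx0) (sub_nonneg.2 hQ1)]
          linarith
        · have h1 : 1 - x ≤ P * C := by nlinarith
          have h2 : Q * R ≤ 1 := by nlinarith
          linarith
end

section
/- Let x_1,…,x_n be real numbers with 1 ≥ x_1 ≥ x_2 ≥ … ≥ x_n ≥ 0. Then ∏_{i=1}^n (1 − x_i) + x_1 ≥ ∏_{i=2}^n 1/(1 + x_i). -/
/-- if `1 ≥ x₁ ≥ x₂ ≥ … ≥ xₙ ≥ 0` then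
`∏_{i=1}^n (1 - xᵢ) + x₁ ≥ ∏_{i=2}^n 1/(1 + xᵢ)`. -/
theorem stmt4 (n : ℕ) (hn : 1 ≤ n) (x : ℕ → ℝ)
    (hle : ∀ i ∈ Finset.Icc 1 n, x i ≤ 1)
    (hnonneg : ∀ i ∈ Finset.Icc 1 n, 0 ≤ x i)
    (hmono : ∀ i j, 1 ≤ i → i ≤ j → j ≤ n → x j ≤ x i) :
    (∏ i ∈ Finset.Icc 1 n, (1 - x i)) + x 1 ≥ ∏ i ∈ Finset.Icc 2 n, (1 + x i)⁻¹ := by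
  induction n with
  | zero => exact absurd hn (by omega)
  | succ n ih =>
    rcases Nat.eq_zero_or_pos n with rfl | hn1
    · simp
    · have hle' : ∀ i ∈ Finset.Icc 1 n, x i ≤ 1 := fun i hi => by
        simp only [Finset.mem_Icc] at hi ⊢
        exact hle i (Finset.mem_Icc.mpr ⟨hi.1, by omega⟩)
      have hnonneg' : ∀ i ∈ Finset.Icc 1 n, 0 ≤ x i := fun i hi => by
        simp only [Finset.mem_Icc] at hi
        exact hnonneg i (Finset.mem_Icc.mpr ⟨hi.1, by omega⟩)
      have hmono' : ∀ i j, 1 ≤ i → i ≤ j → j ≤ n → x j ≤ x i :=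
        fun i j h1 h2 h3 => hmono i j h1 h2 (by omega)
      have IH := ih hn1 hle' hnonneg' hmono'
      rw [Finset.prod_Icc_succ_top (by omega : 1 ≤ n + 1),
        Finset.prod_Icc_succ_top (by omega : 2 ≤ n + 1)]
      set P := ∏ i ∈ Finset.Icc 1 n, (1 - x i) with hPdef
      set Q := ∏ i ∈ Finset.Icc 2 n, (1 + x i)⁻¹ with hQdef
      have hP0 : 0 ≤ P := Finset.prod_nonneg fun i hi => by
        have := hle' i hi; linarith
      have hP1 : P ≤ 1 := Finset.prod_le_one
        (fun i hi => by have := hle' i hi; linarith)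
        (fun i hi => by have := hnonneg' i hi; linarith)
      have ht0 : 0 ≤ x (n + 1) := hnonneg _ (Finset.mem_Icc.mpr ⟨by omega, le_rfl⟩)
      have ht1 : x (n + 1) ≤ x 1 := hmono 1 (n + 1) le_rfl (by omega) le_rfl
      have hx1 : x 1 ≤ 1 := hle 1 (Finset.mem_Icc.mpr ⟨le_rfl, by omega⟩)
      have hpos : 0 < 1 + x (n + 1) := by linarith
      have key : Q * (1 + x (n + 1))⁻¹ ≤ (P + x 1) * (1 + x (n + 1))⁻¹ :=
        mul_le_mul_of_nonneg_right IH (by positivity)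
      have step : (P + x 1) * (1 + x (n + 1))⁻¹ ≤ P * (1 - x (n + 1)) + x 1 := by
        rw [← div_eq_mul_inv, div_le_iff₀ hpos]
        nlinarith [mul_nonneg ht0 ht0, mul_nonneg ht0 hP0, mul_le_mul ht1 hP1 hP0 (by linarith : (0:ℝ) ≤ x 1)]
      linarith
end

section
/- Let ε be a Rademacher random variable (taking values ±1 with probability 1/2 each). Then for all real numbers a, b and every real p ≥ 3: E|aε + b|^p ≥ |b|^p + (p(p−1)/2) a^2 |b|^{p−2}. Equivalently, (|a+b|^p + |−a+b|^p)/2 ≥ |b|^p + (p(p−1)/2) a^2 |b|^{p−2}. -/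
open MeasureTheory ProbabilityTheory Real
open scoped ENNReal

section aux
open Real Set

lemma sqRpowHalf (y r : ℝ) : ((y^2:ℝ)) ^ (r/2) = |y| ^ r := by
  rw [← sq_abs, ← Real.rpow_natCast |y| 2, ← Real.rpow_mul (abs_nonneg y)]
  congr 1; ring

lemma hT {p : ℝ} (hp : 3 ≤ p) (x : ℝ) : HasDerivAt (fun t : ℝ => ((t^2:ℝ)) ^ (p/2))
    (p * (x * (x^2) ^ ((p-2)/2))) x := by
  have hi : HasDerivAt (fun t : ℝ => t^2) (2*x) x := by
    simpa using hasDerivAt_pow 2 x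
  have := hi.rpow_const (p := p/2) (Or.inr (by linarith))
  convert this using 1
  rw [show p/2 - 1 = (p-2)/2 by ring]
  ring

lemma hS {p : ℝ} (hp : 3 ≤ p) {x : ℝ} (hx : x ≠ 0) :
    HasDerivAt (fun t : ℝ => t * ((t^2:ℝ)) ^ ((p-2)/2))
    ((p-1) * (x^2) ^ ((p-2)/2)) x := by
  have hi : HasDerivAt (fun t : ℝ => t^2) (2*x) x := by
    simpa using hasDerivAt_pow 2 x
  have hR := hi.rpow_const (p := (p-2)/2) (Or.inl (pow_ne_zero 2 hx))
  have := (hasDerivAt_id x).mul hR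
  refine HasDerivAt.congr_deriv this ?_
  have hx2 : (0:ℝ) < x^2 := by positivity
  rw [show (p-2)/2 - 1 = (p-2)/2 - 1 from rfl, Real.rpow_sub hx2, Real.rpow_one]
  simp only [id_eq]
  field_simp
  ring

lemma key_pos {p : ℝ} (hp : 3 ≤ p) {b : ℝ} (hb : 0 < b) {a : ℝ} (ha : 0 ≤ a) :
    2*b^p + p*(p-1)*b^(p-2)*a^2 ≤ (b+a)^p + |b-a|^p := by
  set g : ℝ → ℝ := fun x => ((b+x)^2) ^ (p/2) + ((b-x)^2) ^ (p/2)
    - 2*(b^p) - p*(p-1)*(b^(p-2))*x^2 with hgdef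
  set G : ℝ → ℝ := fun x => p*((b+x) * ((b+x)^2) ^ ((p-2)/2))
    - p*((b-x)*((b-x)^2) ^ ((p-2)/2)) - 2*p*(p-1)*b^(p-2)*x with hGdef
  -- g has derivative G everywhere
  have hg : ∀ x : ℝ, HasDerivAt g (G x) x := by
    intro x
    have h1 : HasDerivAt (fun t : ℝ => b + t) 1 x := (hasDerivAt_id x).const_add b
    have h2 : HasDerivAt (fun t : ℝ => b - t) (-1) x := (hasDerivAt_id x).const_sub b
    have d1 := (hT hp (b+x)).comp x h1
    have d2 := (hT hp (b-x)).comp x h2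
    have d3 : HasDerivAt (fun t : ℝ => p*(p-1)*(b^(p-2))*t^2)
        (p*(p-1)*(b^(p-2))*(2*x)) x := by
      have : HasDerivAt (fun t : ℝ => t^2) (2*x) x := by simpa using hasDerivAt_pow 2 x
      simpa [mul_assoc] using this.const_mul (p*(p-1)*(b^(p-2)))
    have := ((d1.add d2).sub_const (2*(b^p))).sub d3
    refine HasDerivAt.congr_deriv this ?_
    ring
  -- G has derivative G' on points where b±x ≠ 0
  have hG : ∀ x : ℝ, b + x ≠ 0 → b - x ≠ 0 → HasDerivAt G
      (p*(p-1)*((b+x)^2) ^ ((p-2)/2) + p*(p-1)*((b-x)^2) ^ ((p-2)/2) - 2*p*(p-1)*b^(p-2)) x := by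
    intro x h1 h2
    have e1 : HasDerivAt (fun t : ℝ => b + t) 1 x := (hasDerivAt_id x).const_add b
    have e2 : HasDerivAt (fun t : ℝ => b - t) (-1) x := (hasDerivAt_id x).const_sub b
    have d1 := ((hS hp h1).comp x e1).const_mul p
    have d2 := ((hS hp h2).comp x e2).const_mul p
    have d3 : HasDerivAt (fun t : ℝ => 2*p*(p-1)*b^(p-2)*t) (2*p*(p-1)*b^(p-2)) x := by
      simpa using (hasDerivAt_id x).const_mul (2*p*(p-1)*b^(p-2))
    have := (d1.sub d2).sub d3
    refine HasDerivAt.congr_deriv this ?_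
    ring
  -- G' is nonneg for x > 0
  have hG'nonneg : ∀ x : ℝ, 0 < x →
      0 ≤ p*(p-1)*((b+x)^2) ^ ((p-2)/2) + p*(p-1)*((b-x)^2) ^ ((p-2)/2) - 2*p*(p-1)*b^(p-2) := by
    intro x hx
    have hq : (1:ℝ) ≤ p - 2 := by linarith
    have hu : (0:ℝ) ≤ b + x := by linarith
    have hv : (0:ℝ) ≤ |b - x| := abs_nonneg _
    have hkey : 2 * b^(p-2) ≤ (b+x)^(p-2) + |b-x|^(p-2) := by
      have hmid : b ≤ ((b+x) + |b-x|)/2 := by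
        rcases le_total x b with h | h
        · rw [abs_of_nonneg (by linarith)]; linarith
        · rw [abs_of_nonpos (by linarith)]; linarith
      have h1 : b^(p-2) ≤ (((b+x) + |b-x|)/2)^(p-2) :=
        Real.rpow_le_rpow hb.le hmid (by linarith)
      have h2 : (((b+x) + |b-x|)/2)^(p-2) ≤ ((b+x)^(p-2) + |b-x|^(p-2))/2 := by
        have hc := (convexOn_rpow hq).2 (Set.mem_Ici.2 hu) (Set.mem_Ici.2 hv)
          (by norm_num : (0:ℝ) ≤ (1:ℝ)/2) (by norm_num : (0:ℝ) ≤ (1:ℝ)/2) (by norm_num)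
        simp only [smul_eq_mul] at hc
        calc (((b+x) + |b-x|)/2)^(p-2) = ((1:ℝ)/2 * (b+x) + 1/2 * |b-x|)^(p-2) := by ring_nf
          _ ≤ 1/2 * (b+x)^(p-2) + 1/2 * |b-x|^(p-2) := hc
          _ = ((b+x)^(p-2) + |b-x|^(p-2))/2 := by ring
      linarith
    have hpp : (0:ℝ) < p*(p-1) := by nlinarith
    have e1 : ((b+x)^2 : ℝ) ^ ((p-2)/2) = (b+x)^(p-2) := by
      rw [sqRpowHalf, abs_of_nonneg hu]
    have e2 : ((b-x)^2 : ℝ) ^ ((p-2)/2) = |b-x|^(p-2) := sqRpowHalf _ _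
    rw [e1, e2]
    nlinarith [hkey, hpp]
  -- continuity of G
  have hScont : Continuous (fun t : ℝ => t * ((t^2:ℝ)) ^ ((p-2)/2)) :=
    continuous_id.mul ((continuous_pow 2).rpow_const (fun x => Or.inr (by linarith)))
  have hGcont : Continuous G := by
    apply Continuous.sub
    apply Continuous.sub
    · exact (continuous_const.mul (hScont.comp (continuous_const.add continuous_id)))
    · exact (continuous_const.mul (hScont.comp (continuous_const.sub continuous_id)))
    · exact continuous_const.mul continuous_id
  -- G monotone on [0,b]
  have hm1 : MonotoneOn G (Set.Icc 0 b) := by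
    apply monotoneOn_of_hasDerivWithinAt_nonneg (convex_Icc 0 b) hGcont.continuousOn
      (f' := fun x => p*(p-1)*((b+x)^2) ^ ((p-2)/2) + p*(p-1)*((b-x)^2) ^ ((p-2)/2)
        - 2*p*(p-1)*b^(p-2))
    · intro x hx
      rw [interior_Icc] at hx
      exact (hG x (by linarith [hx.1]) (by linarith [hx.2])).hasDerivWithinAt
    · intro x hx
      rw [interior_Icc] at hx
      exact hG'nonneg x hx.1
  -- G monotone on [b,∞)
  have hm2 : MonotoneOn G (Set.Ici b) := by
    apply monotoneOn_of_hasDerivWithinAt_nonneg (convex_Ici b) hGcont.continuousOn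
      (f' := fun x => p*(p-1)*((b+x)^2) ^ ((p-2)/2) + p*(p-1)*((b-x)^2) ^ ((p-2)/2)
        - 2*p*(p-1)*b^(p-2))
    · intro x hx
      rw [interior_Ici] at hx
      have hxb : b < x := hx
      exact (hG x (by linarith) (by linarith)).hasDerivWithinAt
    · intro x hx
      rw [interior_Ici] at hx
      exact hG'nonneg x (lt_trans hb hx)
  have hG0 : G 0 = 0 := by simp [hGdef]
  -- G ≥ 0 on [0,∞)
  have hGnonneg : ∀ x : ℝ, 0 ≤ x → 0 ≤ G x := by
    intro x hx
    rcases le_total x b with h | h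
    · have := hm1 (Set.mem_Icc.2 ⟨le_refl 0, hb.le⟩) (Set.mem_Icc.2 ⟨hx, h⟩) hx
      rwa [hG0] at this
    · have h1 : G b ≤ G x := hm2 (Set.mem_Ici.2 (le_refl b)) (Set.mem_Ici.2 h) h
      have h2 : G 0 ≤ G b := hm1 (Set.mem_Icc.2 ⟨le_refl 0, hb.le⟩)
        (Set.mem_Icc.2 ⟨hb.le, le_refl b⟩) hb.le
      rw [hG0] at h2
      linarith
  -- g monotone on [0,∞)
  have hgmono : MonotoneOn g (Set.Ici 0) := by
    apply monotoneOn_of_hasDerivWithinAt_nonneg (convex_Ici 0)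
      (fun x _ => (hg x).continuousAt.continuousWithinAt) (f' := G)
    · intro x hx; exact (hg x).hasDerivWithinAt
    · intro x hx; rw [interior_Ici] at hx; exact hGnonneg x hx.le
  have hg0 : g 0 = 0 := by
    simp only [hgdef, add_zero, sub_zero]
    rw [sqRpowHalf, abs_of_pos hb]
    ring_nf
  have := hgmono (Set.mem_Ici.2 (le_refl 0)) (Set.mem_Ici.2 ha) ha
  rw [hg0] at this
  simp only [hgdef] at this
  rw [sqRpowHalf (b+a) p, sqRpowHalf (b-a) p, abs_of_nonneg (by linarith : (0:ℝ) ≤ b + a)] at this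
  linarith


lemma key' {p : ℝ} (hp : 3 ≤ p) {b : ℝ} (hb : 0 ≤ b) {a : ℝ} (ha : 0 ≤ a) :
    2*b^p + p*(p-1)*b^(p-2)*a^2 ≤ (b+a)^p + |b-a|^p := by
  rcases eq_or_lt_of_le hb with h | h
  · have hb0 : b = 0 := h.symm
    subst hb0
    rw [Real.zero_rpow (by linarith : p ≠ 0), Real.zero_rpow (by linarith : p - 2 ≠ 0)]
    have h1 : (0:ℝ) ≤ (0+a)^p := Real.rpow_nonneg (by linarith) p
    have h2 : (0:ℝ) ≤ |0-a|^p := Real.rpow_nonneg (abs_nonneg _) p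
    linarith
  · exact key_pos hp h ha

lemma key_main {p : ℝ} (hp : 3 ≤ p) (a b : ℝ) :
    2*|b|^p + p*(p-1)*|b|^(p-2)*a^2 ≤ |a+b|^p + |-a+b|^p := by
  have h := key' hp (abs_nonneg b) (abs_nonneg a)
  rw [sq_abs] at h
  have hswap : (|b|+|a|)^p + (abs (|b|-|a|))^p = |a+b|^p + |-a+b|^p := by
    rcases le_total 0 a with ha | ha <;> rcases le_total 0 b with hb | hb
    · rw [abs_of_nonneg ha, abs_of_nonneg hb,
        show |a+b| = b + a by rw [abs_of_nonneg (by linarith)]; ring,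
        show |-a+b| = |b - a| by congr 1; ring]
    · rw [abs_of_nonneg ha, abs_of_nonpos hb,
        show |-a+b| = -b + a by rw [abs_of_nonpos (by linarith)]; ring,
        show |(-b) - a| = |a+b| by rw [← abs_neg]; congr 1; ring]
      ring
    · rw [abs_of_nonpos ha, abs_of_nonneg hb,
        show |a+b| = |b - -a| by congr 1; ring,
        show |-a+b| = b + -a by rw [abs_of_nonneg (by linarith)]; ring]
      exact add_comm _ _
    · rw [abs_of_nonpos ha, abs_of_nonpos hb,
        show |a+b| = -b + -a by rw [abs_of_nonpos (by linarith)]; ring,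
        show |(-b) - -a| = |-a+b| by rw [← abs_neg]; congr 1; ring]
  rw [hswap] at h
  linarith

end aux

/-- for `ε` Rademacher, all reals `a, b` and `p ≥ 3`,
`E|aε + b|^p ≥ |b|^p + (p(p-1)/2) a² |b|^{p-2}`; equivalently
`(|a+b|^p + |-a+b|^p)/2 ≥ |b|^p + (p(p-1)/2) a² |b|^{p-2}`. -/
theorem stmt9
    {Ω : Type*} [MeasurableSpace Ω] (μ : Measure Ω) [IsProbabilityMeasure μ]
    (ε : Ω → ℝ) (hεmeas : Measurable ε) (hεlaw : Measure.map ε μ = rademacherLaw)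
    (a b : ℝ) (p : ℝ) (hp : 3 ≤ p) :
    ∫ ω, |a * ε ω + b| ^ p ∂μ ≥ |b| ^ p + (p * (p - 1) / 2) * a ^ 2 * |b| ^ (p - 2) := by
  have hcomp : ∫ ω, |a * ε ω + b| ^ p ∂μ = (|a*1+b|^p)/2 + (|a*(-1)+b|^p)/2 := by
    have hf : Measurable fun x : ℝ => |a * x + b| ^ p :=
      (((((continuous_const.mul continuous_id').add continuous_const).abs).rpow_const
        (fun x => Or.inr (by linarith))).measurable)
    have h1 : ∫ ω, |a * ε ω + b| ^ p ∂μ = ∫ x, |a * x + b| ^ p ∂(Measure.map ε μ) :=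
      (integral_map hεmeas.aemeasurable hf.aestronglyMeasurable).symm
    have hint : ∀ c : ℝ, Integrable (fun x : ℝ => |a * x + b| ^ p) (Measure.dirac c) :=
      fun c => (integrable_const _).congr (ae_eq_dirac _).symm
    rw [h1, hεlaw, rademacherLaw]
    rw [integral_add_measure ((hint 1).smul_measure (by norm_num))
        ((hint (-1)).smul_measure (by norm_num)),
      integral_smul_measure, integral_smul_measure, integral_dirac, integral_dirac]
    norm_num [ENNReal.toReal_div]
    ring
  rw [hcomp]
  have h := key_main hp a b
  have e1 : a*1+b = a+b := by ring
  have e2 : a*(-1)+b = -a+b := by ring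
  rw [e1, e2]
  rw [ge_iff_le]
  nlinarith [h]
end
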